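/- Uniqueness for a two-dimensional Volterra integral equation with piecewise kernel: under the hypotheses below, if z and v are continuous solutions of z(s,t) = g(s,t) + Σ_{p=1}^{m} ∫_{a_{p-1}(s)}^{a_p(s)} ∫_{b_{p-1}(t)}^{b_p(t)} k_p(s,t,σ,τ) φ(z(σ,τ)) dτ dσ on Ω = [0,A] × [0,A], then z = v on Ω. -/

import Mathlib

open MeasureTheory Set

/-- Tietze extension from `ContinuousOn` on a closed set. -/
lemma volterra_aux_exists_cont_ext {X : Type*} [TopologicalSpace X] [NormalSpace X]
    {S : Set X} (hS : IsClosed S) (f : X → ℝ) (hf : ContinuousOn f S) :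
    ∃ F : X → ℝ, Continuous F ∧ ∀ x ∈ S, F x = f x := by
  obtain ⟨g, hg⟩ := ContinuousMap.exists_restrict_eq (Y := ℝ) hS ⟨S.restrict f, hf.restrict⟩
  exact ⟨g, g.continuous, fun x hx => by
    have := congrFun (congrArg ContinuousMap.toFun hg) ⟨x, hx⟩
    exact this⟩

/-- |∫f| ≤ |∫g| from a pointwise bound and integrability of `g`. -/
lemma volterra_aux_abs_integral_le
    (f g : ℝ → ℝ) (x y : ℝ) (h : ∀ t ∈ Set.uIoc x y, |f t| ≤ g t)
    (hg : IntervalIntegrable g volume x y) :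
    |∫ t in x..y, f t| ≤ |∫ t in x..y, g t| := by
  rw [← Real.norm_eq_abs (∫ t in x..y, f t)]
  refine intervalIntegral.norm_integral_le_abs_of_norm_le ?_ hg
  refine (ae_restrict_iff' measurableSet_uIoc).mpr (ae_of_all _ ?_)
  intro t ht; rw [Real.norm_eq_abs]; exact h t ht

theorem volterra_2d_piecewise_uniqueness
    (A : ℝ) (hA : 0 < A) (m : ℕ)
    (a b : ℕ → ℝ → ℝ)
    (ha_cont : ∀ p, ContinuousOn (a p) (Set.Icc 0 A))
    (hb_cont : ∀ p, ContinuousOn (b p) (Set.Icc 0 A))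
    (ha_maps : ∀ p, ∀ s ∈ Set.Icc 0 A, a p s ∈ Set.Icc 0 A)
    (hb_maps : ∀ p, ∀ t ∈ Set.Icc 0 A, b p t ∈ Set.Icc 0 A)
    (ha0 : ∀ s ∈ Set.Icc 0 A, a 0 s = 0)
    (ham : ∀ s ∈ Set.Icc 0 A, a m s = s)
    (ha_mono : ∀ p < m, ∀ s ∈ Set.Icc 0 A, a p s ≤ a (p + 1) s)
    (hb0 : ∀ t ∈ Set.Icc 0 A, b 0 t = 0)
    (hbm : ∀ t ∈ Set.Icc 0 A, b m t = t)
    (hb_mono : ∀ p < m, ∀ t ∈ Set.Icc 0 A, b p t ≤ b (p + 1) t)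
    (k : ℕ → ℝ × ℝ → ℝ × ℝ → ℝ)
    (hk_cont : ∀ p, ContinuousOn (fun q : (ℝ × ℝ) × (ℝ × ℝ) => k p q.1 q.2)
      ((Set.Icc 0 A ×ˢ Set.Icc 0 A) ×ˢ (Set.Icc 0 A ×ˢ Set.Icc 0 A)))
    (hk_nonneg : ∀ p, ∀ x ∈ Set.Icc 0 A ×ˢ Set.Icc 0 A,
      ∀ w ∈ Set.Icc 0 A ×ˢ Set.Icc 0 A, (0:ℝ) ≤ k p x w)
    (g : ℝ × ℝ → ℝ) (hg : ContinuousOn g (Set.Icc 0 A ×ˢ Set.Icc 0 A))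
    (φ : ℝ → ℝ) (L : ℝ) (hL : 0 < L)
    (hφ : ∀ x y : ℝ, |φ x - φ y| ≤ L * |x - y|)
    (z v : ℝ × ℝ → ℝ)
    (hz_cont : ContinuousOn z (Set.Icc 0 A ×ˢ Set.Icc 0 A))
    (hv_cont : ContinuousOn v (Set.Icc 0 A ×ˢ Set.Icc 0 A))
    (hz : ∀ s ∈ Set.Icc 0 A, ∀ t ∈ Set.Icc 0 A,
      z (s, t) = g (s, t) + ∑ p ∈ Finset.range m,
        ∫ σ in (a p s)..(a (p + 1) s), ∫ τ in (b p t)..(b (p + 1) t),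
          k (p + 1) (s, t) (σ, τ) * φ (z (σ, τ)))
    (hv : ∀ s ∈ Set.Icc 0 A, ∀ t ∈ Set.Icc 0 A,
      v (s, t) = g (s, t) + ∑ p ∈ Finset.range m,
        ∫ σ in (a p s)..(a (p + 1) s), ∫ τ in (b p t)..(b (p + 1) t),
          k (p + 1) (s, t) (σ, τ) * φ (v (σ, τ))) :
    ∀ s ∈ Set.Icc 0 A, ∀ t ∈ Set.Icc 0 A, z (s, t) = v (s, t) := by
  have hAmem : A ∈ Set.Icc (0:ℝ) A := ⟨hA.le, le_refl A⟩
  -- m = 0 is contradictory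
  rcases Nat.eq_zero_or_pos m with hm0 | hm0
  · exfalso
    have h1 := ha0 A hAmem
    have h2 := ham A hAmem
    rw [hm0] at h2
    rw [h1] at h2
    exact absurd h2.symm hA.ne'
  set Ω : Set (ℝ × ℝ) := Set.Icc (0:ℝ) A ×ˢ Set.Icc (0:ℝ) A with hΩdef
  have hΩc : IsCompact Ω := isCompact_Icc.prod isCompact_Icc
  have hΩcl : IsClosed Ω := isClosed_Icc.prod isClosed_Icc
  -- Tietze extensions
  obtain ⟨Z, hZc, hZ⟩ := volterra_aux_exists_cont_ext hΩcl z hz_cont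
  obtain ⟨V, hVc, hV⟩ := volterra_aux_exists_cont_ext hΩcl v hv_cont
  have hKext : ∀ p : ℕ, ∃ Kp : (ℝ × ℝ) × (ℝ × ℝ) → ℝ, Continuous Kp ∧
      ∀ q ∈ Ω ×ˢ Ω, Kp q = k p q.1 q.2 :=
    fun p => volterra_aux_exists_cont_ext (hΩcl.prod hΩcl) _ (hk_cont p)
  choose K' hK'c hK'eq using hKext
  -- bound on |z - v|
  obtain ⟨M₀, hM₀⟩ := hΩc.exists_bound_of_continuousOn (hz_cont.sub hv_cont)
  set M : ℝ := max M₀ 0 with hMdef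
  have hMnn : 0 ≤ M := le_max_right _ _
  have hM : ∀ x ∈ Ω, |z x - v x| ≤ M := fun x hx =>
    le_trans (by simpa using hM₀ x hx) (le_max_left _ _)
  -- uniform bound on the kernels
  have hKb : ∀ p : ℕ, ∃ Cp : ℝ, ∀ q ∈ Ω ×ˢ Ω, |k p q.1 q.2| ≤ Cp := by
    intro p
    obtain ⟨Cp, hCp⟩ := (hΩc.prod hΩc).exists_bound_of_continuousOn (hk_cont p)
    exact ⟨Cp, fun q hq => by simpa using hCp q hq⟩
  choose Kb hKbh using hKb
  set KK : ℝ := ∑ p ∈ Finset.range (m + 1), max (Kb p) 0 with hKKdef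
  have hKKnn : 0 ≤ KK := Finset.sum_nonneg fun p _ => le_max_right _ _
  have hKK : ∀ p < m, ∀ q ∈ Ω ×ˢ Ω, |k (p + 1) q.1 q.2| ≤ KK := by
    intro p hp q hq
    calc |k (p + 1) q.1 q.2| ≤ Kb (p + 1) := hKbh (p + 1) q hq
      _ ≤ max (Kb (p + 1)) 0 := le_max_left _ _
      _ ≤ KK := Finset.single_le_sum (f := fun p => max (Kb p) 0)
          (fun i _ => le_max_right _ _) (Finset.mem_range.mpr (Nat.succ_lt_succ hp))
  -- φ is continuous
  have hφc : Continuous φ := by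
    have hlip : LipschitzWith (Real.toNNReal L) φ := by
      refine LipschitzWith.of_dist_le_mul fun x y => ?_
      rw [Real.dist_eq, Real.dist_eq, Real.coe_toNNReal L hL.le]
      exact hφ x y
    exact hlip.continuous
  set C : ℝ := A * KK * L with hCdef
  have hCnn : 0 ≤ C := mul_nonneg (mul_nonneg hA.le hKKnn) hL.le
  -- main inductive estimate
  have key : ∀ n : ℕ, ∀ s ∈ Set.Icc (0:ℝ) A, ∀ t ∈ Set.Icc (0:ℝ) A,
      |z (s, t) - v (s, t)| ≤ M * C ^ n * s ^ n / n.factorial := by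
    intro n
    induction n with
    | zero =>
      intro s hs t ht
      simpa using hM (s, t) ⟨hs, ht⟩
    | succ n ih =>
      intro s hs t ht
      have hsnn : 0 ≤ s := hs.1
      -- difference of the two equations
      have hdiff : z (s, t) - v (s, t) = ∑ p ∈ Finset.range m,
          ((∫ σ in (a p s)..(a (p + 1) s), ∫ τ in (b p t)..(b (p + 1) t),
              k (p + 1) (s, t) (σ, τ) * φ (z (σ, τ))) -
           (∫ σ in (a p s)..(a (p + 1) s), ∫ τ in (b p t)..(b (p + 1) t),
              k (p + 1) (s, t) (σ, τ) * φ (v (σ, τ)))) := by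
        rw [hz s hs t ht, hv s hs t ht, Finset.sum_sub_distrib]
        ring
      set Dc : ℝ := KK * L * (M * C ^ n / n.factorial) with hDcdef
      have hDcnn : 0 ≤ Dc := by
        apply mul_nonneg (mul_nonneg hKKnn hL.le)
        apply div_nonneg (mul_nonneg hMnn (pow_nonneg hCnn n)) (Nat.cast_nonneg _)
      -- per-piece estimate
      have hterm : ∀ p ∈ Finset.range m,
          |(∫ σ in (a p s)..(a (p + 1) s), ∫ τ in (b p t)..(b (p + 1) t),
              k (p + 1) (s, t) (σ, τ) * φ (z (σ, τ))) -
           (∫ σ in (a p s)..(a (p + 1) s), ∫ τ in (b p t)..(b (p + 1) t),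
              k (p + 1) (s, t) (σ, τ) * φ (v (σ, τ)))| ≤
          (A * Dc / (n + 1)) * ((a (p + 1) s) ^ (n + 1) - (a p s) ^ (n + 1)) := by
        intro p hpmem
        have hp : p < m := Finset.mem_range.mp hpmem
        have hale : a p s ≤ a (p + 1) s := ha_mono p hp s hs
        have haL : a p s ∈ Set.Icc (0:ℝ) A := ha_maps p s hs
        have haR : a (p + 1) s ∈ Set.Icc (0:ℝ) A := ha_maps (p + 1) s hs
        have hble : b p t ≤ b (p + 1) t := hb_mono p hp t ht
        have hbL : b p t ∈ Set.Icc (0:ℝ) A := hb_maps p t ht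
        have hbR : b (p + 1) t ∈ Set.Icc (0:ℝ) A := hb_maps (p + 1) t ht
        have haIcc : Set.uIcc (a p s) (a (p + 1) s) ⊆ Set.Icc (0:ℝ) A := by
          rw [Set.uIcc_of_le hale]; exact Set.Icc_subset_Icc haL.1 haR.2
        have hbIcc : Set.uIcc (b p t) (b (p + 1) t) ⊆ Set.Icc (0:ℝ) A := by
          rw [Set.uIcc_of_le hble]; exact Set.Icc_subset_Icc hbL.1 hbR.2
        set F₁ : ℝ → ℝ → ℝ := fun σ τ => K' (p + 1) ((s, t), (σ, τ)) * φ (Z (σ, τ)) with hF₁def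
        set F₂ : ℝ → ℝ → ℝ := fun σ τ => K' (p + 1) ((s, t), (σ, τ)) * φ (V (σ, τ)) with hF₂def
        have hpair : Continuous fun q : ℝ × ℝ => (((s, t) : ℝ × ℝ), q) :=
          continuous_const.prodMk continuous_id
        have hF₁c : Continuous (Function.uncurry F₁) := by
          have : Function.uncurry F₁ = fun q : ℝ × ℝ => K' (p + 1) ((s, t), q) * φ (Z q) := by
            ext q; simp [Function.uncurry, hF₁def]
          rw [this]
          exact ((hK'c (p + 1)).comp hpair).mul (hφc.comp hZc)
        have hF₂c : Continuous (Function.uncurry F₂) := by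
          have : Function.uncurry F₂ = fun q : ℝ × ℝ => K' (p + 1) ((s, t), q) * φ (V q) := by
            ext q; simp [Function.uncurry, hF₂def]
          rw [this]
          exact ((hK'c (p + 1)).comp hpair).mul (hφc.comp hVc)
        set G₁ : ℝ → ℝ := fun σ => ∫ τ in (b p t)..(b (p + 1) t), F₁ σ τ with hG₁def
        set G₂ : ℝ → ℝ := fun σ => ∫ τ in (b p t)..(b (p + 1) t), F₂ σ τ with hG₂def
        have hG₁c : Continuous G₁ :=
          intervalIntegral.continuous_parametric_intervalIntegral_of_continuous' hF₁c _ _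
        have hG₂c : Continuous G₂ :=
          intervalIntegral.continuous_parametric_intervalIntegral_of_continuous' hF₂c _ _
        -- rewrite the integrals via the extensions
        have hIz : (∫ σ in (a p s)..(a (p + 1) s), ∫ τ in (b p t)..(b (p + 1) t),
            k (p + 1) (s, t) (σ, τ) * φ (z (σ, τ))) = ∫ σ in (a p s)..(a (p + 1) s), G₁ σ := by
          apply intervalIntegral.integral_congr
          intro σ hσ
          have hσA : σ ∈ Set.Icc (0:ℝ) A := haIcc hσ
          apply intervalIntegral.integral_congr
          intro τ hτ
          have hτA : τ ∈ Set.Icc (0:ℝ) A := hbIcc hτ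
          have hmem : ((s, t), (σ, τ)) ∈ Ω ×ˢ Ω := ⟨⟨hs, ht⟩, ⟨hσA, hτA⟩⟩
          simp only [hF₁def]
          rw [hK'eq (p + 1) _ hmem, hZ (σ, τ) ⟨hσA, hτA⟩]
        have hIv : (∫ σ in (a p s)..(a (p + 1) s), ∫ τ in (b p t)..(b (p + 1) t),
            k (p + 1) (s, t) (σ, τ) * φ (v (σ, τ))) = ∫ σ in (a p s)..(a (p + 1) s), G₂ σ := by
          apply intervalIntegral.integral_congr
          intro σ hσ
          have hσA : σ ∈ Set.Icc (0:ℝ) A := haIcc hσ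
          apply intervalIntegral.integral_congr
          intro τ hτ
          have hτA : τ ∈ Set.Icc (0:ℝ) A := hbIcc hτ
          have hmem : ((s, t), (σ, τ)) ∈ Ω ×ˢ Ω := ⟨⟨hs, ht⟩, ⟨hσA, hτA⟩⟩
          simp only [hF₂def]
          rw [hK'eq (p + 1) _ hmem, hV (σ, τ) ⟨hσA, hτA⟩]
        rw [hIz, hIv, ← intervalIntegral.integral_sub
          (hG₁c.intervalIntegrable _ _) (hG₂c.intervalIntegrable _ _)]
        -- pointwise bound for the outer integrand
        have hGbound : ∀ σ ∈ Set.uIoc (a p s) (a (p + 1) s),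
            |G₁ σ - G₂ σ| ≤ (A * Dc) * σ ^ n := by
          intro σ hσ
          have hσA : σ ∈ Set.Icc (0:ℝ) A := haIcc (Set.uIoc_subset_uIcc hσ)
          have hσnn : 0 ≤ σ := hσA.1
          have hinner : ∀ τ ∈ Set.uIoc (b p t) (b (p + 1) t),
              |F₁ σ τ - F₂ σ τ| ≤ Dc * σ ^ n := by
            intro τ hτ
            have hτA : τ ∈ Set.Icc (0:ℝ) A := hbIcc (Set.uIoc_subset_uIcc hτ)
            have hmem : ((s, t), (σ, τ)) ∈ Ω ×ˢ Ω := ⟨⟨hs, ht⟩, ⟨hσA, hτA⟩⟩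
            have hKle : |K' (p + 1) ((s, t), (σ, τ))| ≤ KK := by
              rw [hK'eq (p + 1) _ hmem]
              exact hKK p hp _ hmem
            have hZV : Z (σ, τ) = z (σ, τ) := hZ _ ⟨hσA, hτA⟩
            have hVV : V (σ, τ) = v (σ, τ) := hV _ ⟨hσA, hτA⟩
            have hφle : |φ (Z (σ, τ)) - φ (V (σ, τ))| ≤ L * (M * C ^ n * σ ^ n / n.factorial) := by
              rw [hZV, hVV]
              refine le_trans (hφ _ _) ?_
              exact mul_le_mul_of_nonneg_left (ih σ hσA τ hτA) hL.le
            calc |F₁ σ τ - F₂ σ τ|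
                = |K' (p + 1) ((s, t), (σ, τ))| * |φ (Z (σ, τ)) - φ (V (σ, τ))| := by
                  simp only [hF₁def, hF₂def]
                  rw [← mul_sub, abs_mul]
              _ ≤ KK * (L * (M * C ^ n * σ ^ n / n.factorial)) := by
                  apply mul_le_mul hKle hφle (abs_nonneg _) hKKnn
              _ = Dc * σ ^ n := by rw [hDcdef]; ring
          have h1 : |G₁ σ - G₂ σ| ≤ |∫ τ in (b p t)..(b (p + 1) t), Dc * σ ^ n| := by
            have hsub : G₁ σ - G₂ σ = ∫ τ in (b p t)..(b (p + 1) t), (F₁ σ τ - F₂ σ τ) := by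
              simp only [hG₁def, hG₂def]
              rw [intervalIntegral.integral_sub
                ((hF₁c.uncurry_left σ).intervalIntegrable _ _)
                ((hF₂c.uncurry_left σ).intervalIntegrable _ _)]
            rw [hsub]
            exact volterra_aux_abs_integral_le _ _ _ _ hinner
              (intervalIntegrable_const)
          have h2 : |∫ τ in (b p t)..(b (p + 1) t), Dc * σ ^ n| ≤ (A * Dc) * σ ^ n := by
            rw [intervalIntegral.integral_const, smul_eq_mul]
            rw [abs_mul, abs_of_nonneg (sub_nonneg.mpr hble),
              abs_of_nonneg (mul_nonneg hDcnn (pow_nonneg hσnn n))]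
            have hbdiff : b (p + 1) t - b p t ≤ A := by
              have := hbR.2; have := hbL.1; linarith
            calc (b (p + 1) t - b p t) * (Dc * σ ^ n)
                ≤ A * (Dc * σ ^ n) := by
                  apply mul_le_mul_of_nonneg_right hbdiff
                    (mul_nonneg hDcnn (pow_nonneg hσnn n))
              _ = (A * Dc) * σ ^ n := by ring
          exact h1.trans h2
        -- outer integration
        have hout : |∫ σ in (a p s)..(a (p + 1) s), (G₁ σ - G₂ σ)| ≤
            |∫ σ in (a p s)..(a (p + 1) s), (A * Dc) * σ ^ n| := by
          exact volterra_aux_abs_integral_le _ _ _ _ hGbound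
            ((continuous_const.mul (continuous_pow n)).intervalIntegrable _ _)
        refine hout.trans ?_
        rw [intervalIntegral.integral_const_mul, integral_pow]
        have hpowle : (a p s) ^ (n + 1) ≤ (a (p + 1) s) ^ (n + 1) :=
          pow_le_pow_left₀ haL.1 hale (n + 1)
        have hnn : 0 ≤ (A * Dc) * (((a (p + 1) s) ^ (n + 1) - (a p s) ^ (n + 1)) / (n + 1)) := by
          apply mul_nonneg (mul_nonneg hA.le hDcnn)
          apply div_nonneg (sub_nonneg.mpr hpowle) (by positivity)
        rw [abs_of_nonneg hnn]
        apply le_of_eq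
        ring
      -- sum up the pieces
      have hsum : |z (s, t) - v (s, t)| ≤
          ∑ p ∈ Finset.range m,
            (A * Dc / (n + 1)) * ((a (p + 1) s) ^ (n + 1) - (a p s) ^ (n + 1)) := by
        rw [hdiff]
        exact le_trans (Finset.abs_sum_le_sum_abs _ _) (Finset.sum_le_sum hterm)
      rw [← Finset.mul_sum, Finset.sum_range_sub (fun p => (a p s) ^ (n + 1))] at hsum
      rw [ham s hs, ha0 s hs, zero_pow (Nat.succ_ne_zero n)] at hsum
      refine hsum.trans (le_of_eq ?_)
      have hfact : ((n + 1).factorial : ℝ) = (n + 1) * n.factorial := by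
        rw [Nat.factorial_succ]; push_cast; ring
      have hfne : (n.factorial : ℝ) ≠ 0 := Nat.cast_ne_zero.mpr (Nat.factorial_ne_zero n)
      have hn1ne : ((n:ℝ) + 1) ≠ 0 := by positivity
      rw [hDcdef, hCdef, hfact]
      field_simp
      ring
  -- pass to the limit
  intro s hs t ht
  have habs : ∀ n : ℕ, |z (s, t) - v (s, t)| ≤ M * (C * A) ^ n / n.factorial := by
    intro n
    refine (key n s hs t ht).trans ?_
    calc M * C ^ n * s ^ n / n.factorial ≤ M * C ^ n * A ^ n / n.factorial := by
          gcongr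
          all_goals first | exact hs.1 | exact hs.2 | positivity
      _ = M * (C * A) ^ n / n.factorial := by rw [mul_pow]; ring
  have hlim : Filter.Tendsto (fun n : ℕ => M * (C * A) ^ n / n.factorial)
      Filter.atTop (nhds 0) := by
    have h := (FloorSemiring.tendsto_pow_div_factorial_atTop (K := ℝ) (C * A)).const_mul M
    simpa [mul_div_assoc] using h
  have hle : |z (s, t) - v (s, t)| ≤ 0 := ge_of_tendsto' hlim habs
  have := abs_nonpos_iff.mp hle
  linarith [sub_eq_zero.mp this]
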